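/- arXiv:2508.03930 — 2 statements merged into one kernel-verified Lean document; each statement's English description precedes it below -/
import Mathlib

section
/- Let T be a string, τ ≥ 1, and Sync a τ-synchronizing set of T. If R = T[a..b] is a run of T with period p ≥ 2τ - 1, then Sync ∩ [a .. a+p) is non-empty; consequently R has a well-defined sparse-Lyndon position (the position i in Sync ∩ [a..a+p) minimizing T[i..n) lexicographically) and this position is unique. -/
open List

variable {α : Type*}

/-- `frag T a b` is the fragment `T[a..b]` (inclusive, 0-based). -/
def frag (T : List α) (a b : ℕ) : List α := (T.drop a).take (b + 1 - a)

/-- `p` is a period of `S`: `0 < p ≤ |S|` and `S[i] = S[i+p]` for all valid `i`. -/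
def IsPeriodOf (p : ℕ) (S : List α) : Prop :=
  0 < p ∧ p ≤ S.length ∧ ∀ i : ℕ, i + p < S.length → S[i]? = S[i + p]?

/-- The smallest period of `S`. -/
noncomputable def minPeriod (S : List α) : ℕ := sInf {p | IsPeriodOf p S}

/-- `T[a..b]` is a run: periodic (its smallest period occurs at least twice)
and maximal on both sides. -/
def IsRun (T : List α) (a b : ℕ) : Prop :=
  a ≤ b ∧ b < T.length ∧
  2 * minPeriod (frag T a b) ≤ b + 1 - a ∧
  (a = 0 ∨ T[a - 1]? ≠ T[a - 1 + minPeriod (frag T a b)]?) ∧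
  (b = T.length - 1 ∨ T[b + 1]? ≠ T[b + 1 - minPeriod (frag T a b)]?)

/-- `W` occurs in `T` at position `s`. -/
def OccursAt (T : List α) (s : ℕ) (W : List α) : Prop :=
  s + W.length ≤ T.length ∧ (T.drop s).take W.length = W

/-- The set of distinct square substrings of `T`. -/
def Squares (T : List α) : Set (List α) :=
  {W | ∃ X : List α, X ≠ [] ∧ W = X ++ X ∧ W <:+: T}

/-- A non-empty string is primitive if it is not a proper power. -/
def Primitive (U : List α) : Prop :=
  U ≠ [] ∧ ∀ (V : List α) (k : ℕ), U = (List.replicate k V).flatten → k = 1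

/-- Cyclic rotation moving the first `c` characters to the end. -/
def rot (c : ℕ) (L : List α) : List α := L.drop c ++ L.take c

/-- `lam` is the Lyndon root of a periodic string `S`: the lexicographically
smallest rotation of `S[0..per(S))`. -/
def LyndonRootOf [LinearOrder α] (S lam : List α) : Prop :=
  (∃ c < minPeriod S, lam = rot c (S.take (minPeriod S))) ∧
  ∀ c < minPeriod S, lam ≤ rot c (S.take (minPeriod S))

/-- Squares generated by a periodic string `U`: squares contained in `U`
whose smallest period equals that of `U`. -/
def FragSquares (U : List α) : Set (List α) :=
  {W | ∃ X : List α, X ≠ [] ∧ W = X ++ X ∧ W <:+: U ∧ minPeriod W = minPeriod U}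

/-- `subper U`: the minimum of `per(X)` over squares `X²` generated by `U`. -/
noncomputable def subper (U : List α) : ℕ :=
  sInf {q | ∃ X : List α, X ≠ [] ∧ (X ++ X) <:+: U ∧
    minPeriod (X ++ X) = minPeriod U ∧ minPeriod X = q}

/-- Fragments `[a..b]` and `[a'..b']` are neighboring:
`[a-1..b+1] ∩ [a'..b'] ≠ ∅`. -/
def Neighboring (a b a' b' : ℕ) : Prop := a ≤ b' + 1 ∧ a' ≤ b + 1

/-- `T[x..y]` is a layer of the pyramid of the neighboring runs
`F = T[a..b]` and `F' = T[a'..b']` (with `a < a'`): a subperiodic run `R`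
with `subper(R) = per(F)` such that `R ∩ (F ∪ F')` is periodic with
period `per(R)`. -/
def IsLayer (T : List α) (a b a' b' x y : ℕ) : Prop :=
  IsRun T x y ∧
  4 * subper (frag T x y) ≤ minPeriod (frag T x y) ∧
  subper (frag T x y) = minPeriod (frag T a b) ∧
  2 * minPeriod (frag T x y) ≤ min y b' + 1 - max x a ∧
  IsPeriodOf (minPeriod (frag T x y)) (frag T (max x a) (min y b'))

/-- A `τ`-synchronizing set of `T` (Kempa–Kociumaka): consistency and density. -/
def SyncSet (T : List α) (τ : ℕ) (S : Set ℕ) : Prop :=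
  (∀ i ∈ S, i + 2 * τ ≤ T.length) ∧
  (∀ i j : ℕ, i + 2 * τ ≤ T.length → j + 2 * τ ≤ T.length →
    (T.drop i).take (2 * τ) = (T.drop j).take (2 * τ) → (i ∈ S ↔ j ∈ S)) ∧
  (∀ i : ℕ, i + 3 * τ - 1 ≤ T.length →
    ((∀ k ∈ S, k < i ∨ i + τ ≤ k) ↔
      3 * minPeriod ((T.drop i).take (3 * τ - 1)) ≤ τ))

section Aux
variable {β : Type*}

/-- `f` is `p`-periodic on positions `x..y` (inclusive). -/
def PerOn (f : ℕ → β) (x y p : ℕ) : Prop := ∀ i, x ≤ i → i + p ≤ y → f i = f (i + p)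

lemma PerOn.mono {f : ℕ → β} {x y p x' y' : ℕ} (h : PerOn f x y p) (hx : x ≤ x')
    (hy : y' ≤ y) : PerOn f x' y' p := fun i hi hip => h i (hx.trans hi) (hip.trans hy)

lemma perOn_congr_aux {f : ℕ → β} {x y p : ℕ} (hp : 0 < p) (h : PerOn f x y p) :
    ∀ k u v, x ≤ u → u ≤ v → v ≤ y → v - u = p * k → f u = f v := by
  intro k
  induction k with
  | zero => intro u v _ huv _ he; exact congrArg f (by omega)
  | succ k ih =>
    intro u v hu huv hv he
    rw [Nat.mul_succ] at he
    have h1 : f u = f (u + p) := h u hu (by omega)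
    rw [h1]; exact ih (u + p) v (by omega) (by omega) hv (by omega)

lemma perOn_congr {f : ℕ → β} {x y p u v : ℕ} (h : PerOn f x y p) (hu : x ≤ u)
    (huv : u ≤ v) (hv : v ≤ y) (hdvd : p ∣ v - u) : f u = f v := by
  rcases Nat.eq_zero_or_pos p with rfl | hp
  · exact congrArg f (by omega)
  · obtain ⟨k, hk⟩ := hdvd
    exact perOn_congr_aux hp h k u v hu huv hv hk

lemma dvd_sub_of_mod_eq' {g a b : ℕ} (h : a % g = b % g) : g ∣ b - a := by
  rcases le_total a b with hab | hab
  · exact (Nat.modEq_iff_dvd' hab).mp h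
  · have : b - a = 0 := by omega
    simp [this]

/-- Extend a small period `g` from a long-enough prefix block to the whole interval. -/
lemma perOn_extend_left {f : ℕ → β} {x y m p g : ℕ} (hp : 0 < p) (hg : 0 < g)
    (hgp : g ∣ p) (hP : PerOn f x y p) (hG : PerOn f x m g) (hm : x + p ≤ m + 1) :
    PerOn f x y g := by
  intro i hi hig
  set j := x + (i - x) % p with hj
  set j' := x + (i + g - x) % p with hj'
  have hjp : (i - x) % p < p := Nat.mod_lt _ hp
  have hj'p : (i + g - x) % p < p := Nat.mod_lt _ hp
  have h1 : f j = f i := by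
    refine perOn_congr hP (by omega) ?_ (by omega) ?_
    · have := Nat.mod_le (i - x) p; omega
    · have hmd := Nat.mod_add_div (i - x) p
      exact ⟨(i - x) / p, by omega⟩
  have h2 : f j' = f (i + g) := by
    refine perOn_congr hP (by omega) ?_ (by omega) ?_
    · have := Nat.mod_le (i + g - x) p; omega
    · have hmd := Nat.mod_add_div (i + g - x) p
      exact ⟨(i + g - x) / p, by omega⟩
  have hmods : (j - x) % g = (j' - x) % g := by
    have e1 : (j - x) % g = (i - x) % g := by
      have e : j - x = (i - x) % p := by omega
      rw [e, Nat.mod_mod_of_dvd _ hgp]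
    have e2 : (j' - x) % g = (i + g - x) % g := by
      have e : j' - x = (i + g - x) % p := by omega
      rw [e, Nat.mod_mod_of_dvd _ hgp]
    have e3 : (i + g - x) % g = (i - x) % g := by
      have e : i + g - x = (i - x) + g := by omega
      rw [e, Nat.add_mod_right]
    rw [e1, e2, e3]
  have h3 : f j = f j' := by
    rcases le_total j j' with hle | hle
    · refine perOn_congr hG (by omega) hle (by omega) ?_
      have hd : g ∣ (j' - x) - (j - x) := dvd_sub_of_mod_eq' hmods
      have hjj : j' - j = (j' - x) - (j - x) := by omega
      rw [hjj]; exact hd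
    · refine (perOn_congr hG (by omega) hle (by omega) ?_).symm
      have hd : g ∣ (j - x) - (j' - x) := dvd_sub_of_mod_eq' hmods.symm
      have hjj : j - j' = (j - x) - (j' - x) := by omega
      rw [hjj]; exact hd
  rw [← h1, h3, h2]

/-- Extend a small period `g` from a long-enough suffix block to the whole interval. -/
lemma perOn_extend_right {f : ℕ → β} {x y m p g : ℕ} (hp : 0 < p) (hg : 0 < g)
    (hgp : g ∣ p) (hP : PerOn f x y p) (hG : PerOn f m y g) (hm : m + p ≤ y + 1) :
    PerOn f x y g := by
  intro i hi hig
  set j := y - (y - i) % p with hj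
  set j' := y - (y - (i + g)) % p with hj'
  have hjp : (y - i) % p < p := Nat.mod_lt _ hp
  have hj'p : (y - (i + g)) % p < p := Nat.mod_lt _ hp
  have hiy : i ≤ y := by omega
  have h1 : f i = f j := by
    refine perOn_congr hP hi ?_ (by omega) ?_
    · have := Nat.mod_le (y - i) p; omega
    · have hmd := Nat.mod_add_div (y - i) p
      exact ⟨(y - i) / p, by omega⟩
  have h2 : f (i + g) = f j' := by
    refine perOn_congr hP (by omega) ?_ (by omega) ?_
    · have := Nat.mod_le (y - (i + g)) p; omega
    · have hmd := Nat.mod_add_div (y - (i + g)) p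
      exact ⟨(y - (i + g)) / p, by omega⟩
  have hmods : (y - j) % g = (y - j') % g := by
    have e1 : (y - j) % g = (y - i) % g := by
      have e : y - j = (y - i) % p := by omega
      rw [e, Nat.mod_mod_of_dvd _ hgp]
    have e2 : (y - j') % g = (y - (i + g)) % g := by
      have e : y - j' = (y - (i + g)) % p := by omega
      rw [e, Nat.mod_mod_of_dvd _ hgp]
    have e3 : (y - i) % g = (y - (i + g)) % g := by
      have e : y - i = (y - (i + g)) + g := by omega
      rw [e, Nat.add_mod_right]
    rw [e1, e2, ← e3]
  have h3 : f j = f j' := by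
    rcases le_total j j' with hle | hle
    · refine perOn_congr hG (by omega) hle (by omega) ?_
      have hd : g ∣ (y - j) - (y - j') := dvd_sub_of_mod_eq' hmods.symm
      have hjj : j' - j = (y - j) - (y - j') := by omega
      rw [hjj]; exact hd
    · refine (perOn_congr hG (by omega) hle (by omega) ?_).symm
      have hd : g ∣ (y - j') - (y - j) := dvd_sub_of_mod_eq' hmods
      have hjj : j - j' = (y - j') - (y - j) := by omega
      rw [hjj]; exact hd
  rw [h1, h3, ← h2]

/-- Glue two overlapping `g`-periodic intervals (overlap of length at least `g`). -/
lemma perOn_glue {f : ℕ → β} {x y x' y' g : ℕ} (h1 : PerOn f x y g) (h2 : PerOn f x' y' g)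
    (hov : x' + g ≤ y + 1) : PerOn f x y' g := by
  intro i hi hig
  by_cases hc : i + g ≤ y
  · exact h1 i hi hc
  · exact h2 i (by omega) hig

/-- Fine and Wilf, weak version. -/
lemma fineWilf_aux {f : ℕ → β} :
    ∀ s {x y p q : ℕ}, p + q ≤ s → 0 < p → 0 < q → PerOn f x y p → PerOn f x y q →
      x + p + q ≤ y + 1 → PerOn f x y (Nat.gcd p q) := by
  intro s
  induction s with
  | zero => intro x y p q h hp; omega
  | succ s ih =>
    intro x y p q hs hp hq hP hQ hy
    rcases lt_trichotomy p q with h | h | h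
    · rw [Nat.gcd_comm]
      have key : PerOn f x (y - p) (q - p) := by
        intro i hi hir
        have h1 : f i = f (i + q) := hQ i hi (by omega)
        have h2 : f (i + (q - p)) = f (i + q) := by
          have h3 := hP (i + (q - p)) (by omega) (by omega)
          have e : i + (q - p) + p = i + q := by omega
          rw [e] at h3; exact h3
        rw [h1, ← h2]
      have hQ' : PerOn f x (y - p) p := hP.mono le_rfl (by omega)
      have hrec := ih (p := q - p) (q := p) (by omega) (by omega) hp key hQ' (by omega)
      have hgcd : Nat.gcd (q - p) p = Nat.gcd q p := Nat.gcd_sub_self_left (le_of_lt h)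
      rw [hgcd] at hrec
      exact perOn_extend_left hp (Nat.gcd_pos_of_pos_right _ hp) (Nat.gcd_dvd_right q p)
        hP hrec (by omega)
    · subst h; rw [Nat.gcd_self]; exact hP
    · have key : PerOn f x (y - q) (p - q) := by
        intro i hi hir
        have h1 : f i = f (i + p) := hP i hi (by omega)
        have h2 : f (i + (p - q)) = f (i + p) := by
          have h3 := hQ (i + (p - q)) (by omega) (by omega)
          have e : i + (p - q) + q = i + p := by omega
          rw [e] at h3; exact h3
        rw [h1, ← h2]
      have hQ' : PerOn f x (y - q) q := hQ.mono le_rfl (by omega)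
      have hrec := ih (p := p - q) (q := q) (by omega) (by omega) hq key hQ' (by omega)
      have hgcd : Nat.gcd (p - q) q = Nat.gcd p q := Nat.gcd_sub_self_left (le_of_lt h)
      rw [hgcd] at hrec
      exact perOn_extend_left hq (Nat.gcd_pos_of_pos_left _ hp) (Nat.gcd_dvd_right p q)
        hQ hrec (by omega)

lemma fineWilf {f : ℕ → β} {x y p q : ℕ} (hp : 0 < p) (hq : 0 < q)
    (hP : PerOn f x y p) (hQ : PerOn f x y q) (hy : x + p + q ≤ y + 1) :
    PerOn f x y (Nat.gcd p q) :=
  fineWilf_aux (p + q) le_rfl hp hq hP hQ hy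

section ListPeriods

lemma length_drop_take {T : List α} {x m : ℕ} (hxm : x + m ≤ T.length) :
    ((T.drop x).take m).length = m := by
  simp [List.length_take, List.length_drop]; omega

lemma perOn_of_isPeriodOf {T : List α} {x m p : ℕ} (hxm : x + m ≤ T.length)
    (h : IsPeriodOf p ((T.drop x).take m)) : PerOn (T[·]?) x (x + m - 1) p := by
  obtain ⟨hp, hpl, hper⟩ := h
  rw [length_drop_take hxm] at hpl
  intro i hi hig
  have hj : (i - x) + p < m := by omega
  have hh := hper (i - x) (by rw [length_drop_take hxm]; exact hj)
  rw [List.getElem?_take_of_lt (by omega), List.getElem?_take_of_lt (by omega), List.getElem?_drop,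
    List.getElem?_drop] at hh
  rw [show x + (i - x) = i from by omega, show x + (i - x + p) = i + p from by omega] at hh
  exact hh

lemma isPeriodOf_of_perOn {T : List α} {x m p : ℕ} (hxm : x + m ≤ T.length) (hp : 0 < p)
    (hpm : p ≤ m) (h : PerOn (T[·]?) x (x + m - 1) p) : IsPeriodOf p ((T.drop x).take m) := by
  refine ⟨hp, by rw [length_drop_take hxm]; exact hpm, ?_⟩
  intro i hip
  rw [length_drop_take hxm] at hip
  rw [List.getElem?_take_of_lt (by omega), List.getElem?_take_of_lt (by omega), List.getElem?_drop, List.getElem?_drop]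
  have hh := h (x + i) (by omega) (by omega)
  rwa [show x + i + p = x + (i + p) from by omega] at hh

lemma isPeriodOf_length {S : List α} (hS : S ≠ []) : IsPeriodOf S.length S :=
  ⟨List.length_pos_iff.mpr hS, le_rfl, fun _ hi => absurd hi (by omega)⟩

lemma minPeriod_isPeriodOf {S : List α} (hS : S ≠ []) : IsPeriodOf (minPeriod S) S := by
  have h : sInf {p | IsPeriodOf p S} ∈ {p | IsPeriodOf p S} :=
    Nat.sInf_mem ⟨S.length, isPeriodOf_length hS⟩
  exact h

lemma minPeriod_le {S : List α} {p : ℕ} (h : IsPeriodOf p S) : minPeriod S ≤ p := by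
  have hm : p ∈ {q | IsPeriodOf q S} := h
  exact Nat.sInf_le hm

end ListPeriods
/-- Every run with period at least `2τ - 1` contains a synchronizing position
in its first period of positions; hence its sparse-Lyndon position exists and
is unique. -/
theorem sparse_lyndon_position_exists [LinearOrder α] (T : List α)
    (τ : ℕ) (S : Set ℕ) (a b : ℕ)
    (hτ : 1 ≤ τ) (hS : SyncSet T τ S) (hrun : IsRun T a b)
    (hp : 2 * τ - 1 ≤ minPeriod (frag T a b)) :
    (∃ i ∈ S, a ≤ i ∧ i < a + minPeriod (frag T a b)) ∧
    ∃! i : ℕ, i ∈ S ∧ a ≤ i ∧ i < a + minPeriod (frag T a b) ∧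
      ∀ j ∈ S, a ≤ j → j < a + minPeriod (frag T a b) → T.drop i ≤ T.drop j := by
  classical
  obtain ⟨hab, hbn, h2p, -, -⟩ := hrun
  set p := minPeriod (frag T a b) with hpdef
  have hfraglen : (frag T a b).length = b + 1 - a := length_drop_take (by omega)
  have hfragne : frag T a b ≠ [] := by
    intro hnil; rw [hnil] at hfraglen; simp at hfraglen; omega
  have hper := minPeriod_isPeriodOf hfragne
  have hp0 : 0 < p := hper.1
  have hplen : p ≤ b + 1 - a := by have := hper.2.1; rwa [hfraglen] at this
  have hPab : PerOn (T[·]?) a b p := by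
    have hh := perOn_of_isPeriodOf (x := a) (m := b + 1 - a) (by omega) hper
    rwa [show a + (b + 1 - a) - 1 = b from by omega] at hh
  have hτp : τ ≤ p := by omega
  -- existence of a synchronizing position in [a, a+p)
  have hex : ∃ i ∈ S, a ≤ i ∧ i < a + p := by
    by_contra hcon
    push_neg at hcon
    have hwin : ∀ i, a ≤ i → i + τ ≤ a + p →
        ∃ q, 0 < q ∧ 3 * q ≤ τ ∧ PerOn (T[·]?) i (i + 3 * τ - 2) q := by
      intro i hia hit
      have hlen : i + 3 * τ - 1 ≤ T.length := by omega
      have hdens : ∀ k ∈ S, k < i ∨ i + τ ≤ k := by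
        intro k hk
        rcases lt_or_ge k a with hka | hka
        · exact Or.inl (by omega)
        · have := hcon k hk hka; exact Or.inr (by omega)
      have hq := (hS.2.2 i hlen).mp hdens
      set W := (T.drop i).take (3 * τ - 1) with hW
      have hWlen : W.length = 3 * τ - 1 := length_drop_take (by omega)
      have hWne : W ≠ [] := by intro h; rw [h] at hWlen; simp at hWlen; omega
      have hWper := minPeriod_isPeriodOf hWne
      refine ⟨minPeriod W, hWper.1, hq, ?_⟩
      have hh := perOn_of_isPeriodOf (x := i) (m := 3 * τ - 1) (by omega) hWper
      rwa [show i + (3 * τ - 1) - 1 = i + 3 * τ - 2 from by omega] at hh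
    have hseg : ∀ d, d ≤ p - τ →
        ∃ r, 0 < r ∧ 3 * r ≤ τ ∧ PerOn (T[·]?) a (a + d + 3 * τ - 2) r := by
      intro d
      induction d with
      | zero =>
        intro _
        obtain ⟨q, h1, h2, h3⟩ := hwin a le_rfl (by omega)
        exact ⟨q, h1, h2, by simpa using h3⟩
      | succ d ih =>
        intro hd
        obtain ⟨r, hr0, hr3, hrP⟩ := ih (by omega)
        obtain ⟨q, hq0, hq3, hqP⟩ := hwin (a + d + 1) (by omega) (by omega)
        rw [show a + d + 1 + 3 * τ - 2 = a + d + 3 * τ - 1 from by omega] at hqP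
        set g := Nat.gcd r q with hg
        have hg0 : 0 < g := Nat.gcd_pos_of_pos_left _ hr0
        have hgr : g ∣ r := Nat.gcd_dvd_left r q
        have hgq : g ∣ q := Nat.gcd_dvd_right r q
        have hgle : g ≤ r := Nat.le_of_dvd hr0 hgr
        have hov1 : PerOn (T[·]?) (a + d + 1) (a + d + 3 * τ - 2) r :=
          hrP.mono (by omega) le_rfl
        have hov2 : PerOn (T[·]?) (a + d + 1) (a + d + 3 * τ - 2) q :=
          hqP.mono le_rfl (by omega)
        have hovg : PerOn (T[·]?) (a + d + 1) (a + d + 3 * τ - 2) g :=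
          fineWilf hr0 hq0 hov1 hov2 (by omega)
        have hseg_g : PerOn (T[·]?) a (a + d + 3 * τ - 2) g :=
          perOn_extend_right hr0 hg0 hgr hrP hovg (by omega)
        have hwin_g : PerOn (T[·]?) (a + d + 1) (a + d + 3 * τ - 1) g :=
          perOn_extend_left hq0 hg0 hgq hqP hovg (by omega)
        refine ⟨g, hg0, by omega, ?_⟩
        have hglue := perOn_glue hseg_g hwin_g (by omega)
        rwa [show a + (d + 1) + 3 * τ - 2 = a + d + 3 * τ - 1 from by omega]
    obtain ⟨r, hr0, hr3, hrP⟩ := hseg (p - τ) le_rfl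
    rw [show a + (p - τ) + 3 * τ - 2 = a + p + 2 * τ - 2 from by omega] at hrP
    have hpre : PerOn (T[·]?) a (a + p + 2 * τ - 2) p := hPab.mono le_rfl (by omega)
    have hFW : PerOn (T[·]?) a (a + p + 2 * τ - 2) (Nat.gcd p r) :=
      fineWilf hp0 hr0 hpre hrP (by omega)
    have hg0 : 0 < Nat.gcd p r := Nat.gcd_pos_of_pos_left _ hp0
    have hfull : PerOn (T[·]?) a b (Nat.gcd p r) :=
      perOn_extend_left hp0 hg0 (Nat.gcd_dvd_left p r) hPab hFW (by omega)
    have hgle : Nat.gcd p r ≤ r := Nat.le_of_dvd hr0 (Nat.gcd_dvd_right p r)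
    have hgper : IsPeriodOf (Nat.gcd p r) (frag T a b) :=
      isPeriodOf_of_perOn (x := a) (m := b + 1 - a) (by omega) hg0 (by omega)
        (by rwa [show a + (b + 1 - a) - 1 = b from by omega])
    have hle : p ≤ Nat.gcd p r := minPeriod_le hgper
    omega
  refine ⟨hex, ?_⟩
  set P : Finset ℕ := (Finset.Ico a (a + p)).filter (· ∈ S) with hPdef
  obtain ⟨i0, hi0S, hi0a, hi0p⟩ := hex
  have hi0P : i0 ∈ P := by
    simp only [hPdef, Finset.mem_filter, Finset.mem_Ico]
    exact ⟨⟨hi0a, hi0p⟩, hi0S⟩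
  obtain ⟨i, hiP, hmin⟩ := P.exists_min_image (fun j => T.drop j) ⟨i0, hi0P⟩
  have hiS : i ∈ S ∧ a ≤ i ∧ i < a + p := by
    have hh := hiP
    simp only [hPdef, Finset.mem_filter, Finset.mem_Ico] at hh
    exact ⟨hh.2, hh.1.1, hh.1.2⟩
  refine ⟨i, ⟨hiS.1, hiS.2.1, hiS.2.2, ?_⟩, ?_⟩
  · intro j hjS hja hjp
    exact hmin j (by
      simp only [hPdef, Finset.mem_filter, Finset.mem_Ico]
      exact ⟨⟨hja, hjp⟩, hjS⟩)
  · rintro j ⟨hjS, hja, hjp, hjmin⟩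
    have h1 : T.drop j ≤ T.drop i := hjmin i hiS.1 hiS.2.1 hiS.2.2
    have h2 : T.drop i ≤ T.drop j := hmin j (by
      simp only [hPdef, Finset.mem_filter, Finset.mem_Ico]
      exact ⟨⟨hja, hjp⟩, hjS⟩)
    have heq : T.drop i = T.drop j := le_antisymm h2 h1
    have hlen := congrArg List.length heq
    rw [List.length_drop, List.length_drop] at hlen
    have hi2 : i + 2 * τ ≤ T.length := hS.1 i hiS.1
    have hj2 : j + 2 * τ ≤ T.length := hS.1 j hjS
    omega
end Aux
end

section
/- For every integer q ≥ 3 and sufficiently large even n, the string S = (ab)^{n/4} (ba)^{n/4} of length n contains at least (n/2 - q - 1)/2 runs with period at least q; specifically, for each i with 2i+1 ≥ q and 2i+1 ≤ n/2 - 1, the fragment b(ab)^i b(ab)^i of S starting at position n/2 - 1 - 2i is a run with period 2i + 1. -/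
open List

variable {α : Type*}

/-- The string `(ab)^m (ba)^m` over `{a := false, b := true}`. -/
def abba (m : ℕ) : List Bool :=
  (List.replicate m [false, true]).flatten ++ (List.replicate m [true, false]).flatten

section Aux

set_option maxHeartbeats 1000000

/-- get? of join (replicate m [x,y]) -/
lemma rep2_get? {α : Type*} (x y : α) : ∀ (m j : ℕ), j < 2*m →
    ((List.replicate m [x,y]).flatten)[j]? = some (if j % 2 = 0 then x else y)
  | 0, j, h => by omega
  | m+1, 0, h => rfl
  | m+1, 1, h => rfl
  | m+1, j+2, h => by
    have := rep2_get? x y m j (by omega)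
    have e : (j+2) % 2 = j % 2 := by omega
    simpa [List.replicate_succ, e] using this

lemma rep2_length {α : Type*} (x y : α) (m : ℕ) :
    ((List.replicate m [x,y]).flatten).length = 2*m := by
  simp [List.length_flatten, mul_comm]

lemma abba_length (m : ℕ) : (abba m).length = 4*m := by
  simp [abba, List.length_flatten, mul_comm]; omega

lemma abba_get?_lo (m j : ℕ) (h : j < 2*m) :
    (abba m)[j]? = some (if j % 2 = 0 then false else true) := by
  rw [abba, List.getElem?_append_left (by rw [rep2_length]; exact h)]
  exact rep2_get? _ _ m j h

lemma abba_get?_hi (m j : ℕ) (h1 : 2*m ≤ j) (h2 : j < 4*m) :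
    (abba m)[j]? = some (if j % 2 = 0 then true else false) := by
  rw [abba, List.getElem?_append_right (by rw [rep2_length]; exact h1), rep2_length,
    rep2_get? _ _ m (j - 2*m) (by omega)]
  have e : (j - 2*m) % 2 = j % 2 := by omega
  rw [e]

lemma frag_get? {α : Type*} (T : List α) (a b j : ℕ) (h : j < b + 1 - a) :
    (frag T a b)[j]? = T[a + j]? := by
  rw [frag, List.getElem?_take_of_lt h, List.getElem?_drop]

lemma frag_length {α : Type*} (T : List α) (a b : ℕ) :
    (frag T a b).length = min (b + 1 - a) (T.length - a) := by
  simp [frag]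

/-- the half-word -/
def Wd (i : ℕ) : List Bool := true :: (List.replicate i [false, true]).flatten

lemma Wd_length (i : ℕ) : (Wd i).length = 2*i+1 := by
  simp [Wd, rep2_length]
  omega

lemma Wd_get? (i j : ℕ) (h : j < 2*i+1) :
    (Wd i)[j]? = some (if j % 2 = 0 then true else false) := by
  match j with
  | 0 => rfl
  | k+1 =>
    show ((List.replicate i [false, true]).flatten)[k]? = _
    rw [rep2_get? _ _ i k (by omega)]
    rcases Nat.mod_two_eq_zero_or_one k with he | he
    · have e0 : k % 2 = 0 := by omega
      have e1 : (k+1) % 2 = 1 := by omega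
      simp [e0, e1]
    · have e0 : k % 2 = 1 := by omega
      have e1 : (k+1) % 2 = 0 := by omega
      simp [e0, e1]

lemma WW_get?_lo (i j : ℕ) (h : j < 2*i+1) :
    (Wd i ++ Wd i)[j]? = some (if j % 2 = 0 then true else false) := by
  rw [List.getElem?_append_left (by rw [Wd_length]; exact h)]
  exact Wd_get? i j h

lemma WW_get?_hi (i j : ℕ) (h1 : 2*i+1 ≤ j) (h2 : j < 4*i+2) :
    (Wd i ++ Wd i)[j]? = some (if j % 2 = 1 then true else false) := by
  rw [List.getElem?_append_right (by rw [Wd_length]; exact h1), Wd_length,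
    Wd_get? i (j - (2*i+1)) (by omega)]
  have : (j - (2*i+1)) % 2 = 0 ↔ j % 2 = 1 := by omega
  rcases Nat.mod_two_eq_zero_or_one j with hp | hp
  · have e0 : j % 2 = 0 := by omega
    have e1 : (j - (2*i+1)) % 2 = 1 := by omega
    simp [e0, e1]
  · have e0 : j % 2 = 1 := by omega
    have e1 : (j - (2*i+1)) % 2 = 0 := by omega
    simp [e0, e1]

lemma WW_length (i : ℕ) : (Wd i ++ Wd i).length = 4*i+2 := by
  simp [Wd_length]; omega

lemma isPeriodOf_WW (i : ℕ) : IsPeriodOf (2*i+1) (Wd i ++ Wd i) := by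
  refine ⟨by omega, by rw [WW_length]; omega, ?_⟩
  intro j hj
  rw [WW_length] at hj
  rw [WW_get?_lo i j (by omega), WW_get?_hi i (j + (2*i+1)) (by omega) (by omega)]
  have : (j + (2*i+1)) % 2 = 1 ↔ j % 2 = 0 := by omega
  rcases Nat.mod_two_eq_zero_or_one j with hp | hp
  · have e0 : j % 2 = 0 := by omega
    have e1 : (j + (2*i+1)) % 2 = 1 := by omega
    simp [e0, e1]
  · have e0 : j % 2 = 1 := by omega
    have e1 : (j + (2*i+1)) % 2 = 0 := by omega
    simp [e0, e1]

lemma WW_period_lb (i p : ℕ) (hp : IsPeriodOf p (Wd i ++ Wd i)) : 2*i+1 ≤ p := by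
  obtain ⟨hp0, hple, hper⟩ := hp
  rw [WW_length] at hple
  by_contra hlt
  push_neg at hlt
  rcases Nat.mod_two_eq_zero_or_one p with he | he
  · -- p even: compare positions 2i+1-p and 2i+1
    have h := hper (2*i+1-p) (by rw [WW_length]; omega)
    have e : 2*i+1-p + p = 2*i+1 := by omega
    rw [e, WW_get?_lo i (2*i+1-p) (by omega),
      WW_get?_hi i (2*i+1) (by omega) (by omega)] at h
    have e0 : (2*i+1-p) % 2 = 1 := by omega
    have e1 : (2*i+1) % 2 = 1 := by omega
    simp [e0, e1] at h
  · -- p odd: compare positions 0 and p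
    have h := hper 0 (by rw [WW_length]; omega)
    rw [zero_add, WW_get?_lo i 0 (by omega), WW_get?_lo i p (by omega)] at h
    have e0 : (0:ℕ) % 2 = 0 := by omega
    have e1 : p % 2 = 1 := by omega
    simp [e1] at h

lemma minPeriod_WW (i : ℕ) : minPeriod (Wd i ++ Wd i) = 2*i+1 := by
  refine le_antisymm (Nat.sInf_le (isPeriodOf_WW i)) ?_
  exact le_csInf ⟨_, isPeriodOf_WW i⟩ fun p hp => WW_period_lb i p hp

lemma frag_eq_WW (m i : ℕ) (h : 2*i+1 ≤ 2*m-1) (hm : 1 ≤ m) :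
    frag (abba m) (2*m-1-2*i) (2*m+2*i) = Wd i ++ Wd i := by
  set a := 2*m-1-2*i with ha
  have hlen : (2*m+2*i) + 1 - a = 4*i+2 := by omega
  apply List.ext_getElem?
  intro j
  by_cases hj : j < 4*i+2
  · rw [frag_get? _ _ _ _ (by omega)]
    by_cases hj2 : j < 2*i+1
    · -- first half of fragment, first half of abba
      rw [abba_get?_lo m (a+j) (by omega), WW_get?_lo i j hj2]
      have : (a+j) % 2 = 0 ↔ j % 2 = 1 := by omega
      rcases Nat.mod_two_eq_zero_or_one j with hp | hp
      · have e0 : j % 2 = 0 := by omega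
        have e1 : (a+j) % 2 = 1 := by omega
        simp [e0, e1]
      · have e0 : j % 2 = 1 := by omega
        have e1 : (a+j) % 2 = 0 := by omega
        simp [e0, e1]
    · rw [abba_get?_hi m (a+j) (by omega) (by omega), WW_get?_hi i j (by omega) hj]
      rcases Nat.mod_two_eq_zero_or_one j with hp | hp
      · have e0 : j % 2 = 0 := by omega
        have e1 : (a+j) % 2 = 1 := by omega
        simp [e0, e1]
      · have e0 : j % 2 = 1 := by omega
        have e1 : (a+j) % 2 = 0 := by omega
        simp [e0, e1]
  · have h1 : (frag (abba m) a (2*m+2*i))[j]? = none := by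
      rw [List.getElem?_eq_none_iff, frag_length, abba_length]; omega
    have h2 : (Wd i ++ Wd i)[j]? = none := by
      rw [List.getElem?_eq_none_iff, WW_length]; omega
    rw [h1, h2]

lemma minPeriod_frag (m i : ℕ) (h : 2*i+1 ≤ 2*m-1) (hm : 1 ≤ m) :
    minPeriod (frag (abba m) (2*m-1-2*i) (2*m+2*i)) = 2*i+1 := by
  rw [frag_eq_WW m i h hm, minPeriod_WW]

lemma isRun_abba (m i : ℕ) (h : 2*i+1 ≤ 2*m-1) (hm : 1 ≤ m) :
    IsRun (abba m) (2*m-1-2*i) (2*m+2*i) := by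
  have hmp := minPeriod_frag m i h hm
  refine ⟨by omega, by rw [abba_length]; omega, by rw [hmp]; omega, ?_, ?_⟩
  · by_cases he : 2*m-1-2*i = 0
    · exact Or.inl he
    · refine Or.inr ?_
      rw [hmp]
      have ha : 2*m-1-2*i - 1 = 2*m-2-2*i := by omega
      rw [ha]
      have hb : 2*m-2-2*i + (2*i+1) = 2*m-1 := by omega
      rw [hb, abba_get?_lo m (2*m-2-2*i) (by omega),
        abba_get?_lo m (2*m-1) (by omega)]
      have e0 : (2*m-2-2*i) % 2 = 0 := by omega
      have e1 : (2*m-1) % 2 = 1 := by omega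
      simp [e0, e1]
  · by_cases he : 2*m+2*i = (abba m).length - 1
    · exact Or.inl he
    · refine Or.inr ?_
      rw [hmp, abba_length] at *
      have hlt : 2*m+2*i+1 < 4*m := by omega
      have hb : 2*m+2*i + 1 - (2*i+1) = 2*m := by omega
      rw [hb, abba_get?_hi m (2*m+2*i+1) (by omega) hlt,
        abba_get?_hi m (2*m) (by omega) (by omega)]
      have e0 : (2*m+2*i+1) % 2 = 1 := by omega
      have e1 : (2*m) % 2 = 0 := by omega
      simp [e0, e1]

end Aux

/-- For every `q ≥ 3` and sufficiently large `m`, the string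
`S = (ab)^m (ba)^m` (of length `n = 4m`) has, for each `i` with
`q ≤ 2i+1 ≤ 2m-1`, a run `b(ab)^i b(ab)^i` starting at position `2m-1-2i`
with period `2i+1`; hence at least `(2m - q - 1)/2` runs of period `≥ q`. -/
theorem abba_many_long_runs (q : ℕ) (hq : 3 ≤ q) :
    ∃ N : ℕ, ∀ m : ℕ, N ≤ m →
      (∀ i : ℕ, q ≤ 2 * i + 1 → 2 * i + 1 ≤ 2 * m - 1 →
        IsRun (abba m) (2 * m - 1 - 2 * i) (2 * m + 2 * i) ∧
        minPeriod (frag (abba m) (2 * m - 1 - 2 * i) (2 * m + 2 * i)) = 2 * i + 1 ∧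
        frag (abba m) (2 * m - 1 - 2 * i) (2 * m + 2 * i) =
          (true :: (List.replicate i [false, true]).flatten) ++
          (true :: (List.replicate i [false, true]).flatten)) ∧
      (2 * m - q - 1) / 2 ≤
        {xy : ℕ × ℕ | IsRun (abba m) xy.1 xy.2 ∧
          q ≤ minPeriod (frag (abba m) xy.1 xy.2)}.ncard := by
  classical
  refine ⟨q, fun m hm => ?_⟩
  have hm1 : 1 ≤ m := by omega
  constructor
  · intro i h1 h2
    exact ⟨isRun_abba m i h2 hm1, minPeriod_frag m i h2 hm1,
      by simpa [Wd] using frag_eq_WW m i h2 hm1⟩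
  · set Tset := {xy : ℕ × ℕ | IsRun (abba m) xy.1 xy.2 ∧
      q ≤ minPeriod (frag (abba m) xy.1 xy.2)} with hT
    have hfin : Tset.Finite := by
      apply Set.Finite.subset ((Set.finite_Iio (4*m)).prod (Set.finite_Iio (4*m)))
      rintro ⟨x, y⟩ ⟨hr, -⟩
      have h1 := hr.1
      have h2 := hr.2.1
      rw [abba_length] at h2
      exact ⟨Set.mem_Iio.mpr (by omega), Set.mem_Iio.mpr h2⟩
    set f : ℕ → ℕ × ℕ := fun i => (2*m-1-2*i, 2*m+2*i) with hf
    have hsub : ↑((Finset.Icc (q/2) (m-1)).image f) ⊆ Tset := by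
      intro xy hxy
      simp only [Finset.coe_image, Set.mem_image, Finset.mem_coe, Finset.mem_Icc] at hxy
      obtain ⟨i, ⟨hi1, hi2⟩, rfl⟩ := hxy
      have h2 : 2*i+1 ≤ 2*m-1 := by omega
      exact ⟨isRun_abba m i h2 hm1, by rw [minPeriod_frag m i h2 hm1]; omega⟩
    have hcard : ((Finset.Icc (q/2) (m-1)).image f).card = (Finset.Icc (q/2) (m-1)).card := by
      apply Finset.card_image_of_injOn
      intro a _ b _ hab
      simp only [hf, Prod.mk.injEq] at hab
      omega
    calc (2 * m - q - 1) / 2 ≤ (Finset.Icc (q/2) (m-1)).card := by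
          rw [Nat.card_Icc]; omega
      _ = ((Finset.Icc (q/2) (m-1)).image f).card := hcard.symm
      _ = (↑((Finset.Icc (q/2) (m-1)).image f) : Set (ℕ × ℕ)).ncard :=
          (Set.ncard_coe_finset _).symm
      _ ≤ Tset.ncard := Set.ncard_le_ncard hsub hfin
end
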